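/- For any ℓ ≥ 1 and cache size k such that ℓ divides k + 1, the LRU algorithm for the ℓ-layered paging problem has competitive ratio at least k. -/

import Mathlib

open MeasureTheory ProbabilityTheory
open scoped ENNReal

/-- A valid evolution of cache states for a paging algorithm with cache size `k`
serving the request sequence `σ`: `caches i` is the cache content just before
serving request number `i` (the cache is initially empty, a page may only enter
the cache when it is requested, the requested page must be in the cache
afterwards, and the cache never holds more than `k` pages). -/
def IsExec {P : Type*} [DecidableEq P] (k : ℕ) (σ : ℕ → P) (caches : ℕ → Finset P) : Prop :=
  caches 0 = ∅ ∧
    ∀ i, σ i ∈ caches (i + 1) ∧ caches (i + 1) ⊆ insert (σ i) (caches i) ∧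
      (caches (i + 1)).card ≤ k

/-- The number of cache misses incurred on the first `m` requests of `σ` by an
algorithm whose cache states are `caches`. -/
def missCount {P : Type*} [DecidableEq P] (σ : ℕ → P) (caches : ℕ → Finset P)
    (m : ℕ) : ℕ :=
  ((Finset.range m).filter fun i => σ i ∉ caches i).card

/-- The optimal (offline) number of cache misses on the first `m` requests of
`σ`, with cache size `k`. -/
noncomputable def OPT {P : Type*} [DecidableEq P] (k : ℕ) (σ : ℕ → P) (m : ℕ) : ℕ :=
  sInf {c | ∃ caches : ℕ → Finset P, IsExec k σ caches ∧ missCount σ caches m = c}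

/-- A deterministic online paging algorithm with cache size `k`: it chooses its
cache content as a function of the history of requests served so far
(the cache is initially empty, a page may only enter the cache when it is
requested, the requested page must be in the cache afterwards, and the cache
never holds more than `k` pages). -/
structure OnlineAlgo (P : Type*) [DecidableEq P] (k : ℕ) where
  cache : List P → Finset P
  cache_nil : cache [] = ∅
  mem_cache : ∀ h p, p ∈ cache (h ++ [p])
  cache_subset : ∀ h p, cache (h ++ [p]) ⊆ insert p (cache h)
  card_cache_le : ∀ h, (cache h).card ≤ k

/-- The cache of online algorithm `A` just before serving request `i` of `σ`. -/
def OnlineAlgo.caches {P : Type*} [DecidableEq P] {k : ℕ} (A : OnlineAlgo P k) (σ : ℕ → P)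
    (i : ℕ) : Finset P :=
  A.cache ((List.range i).map σ)

/-- The cost (number of cache misses) of online algorithm `A` on the first `m`
requests of `σ`. -/
def OnlineAlgo.cost {P : Type*} [DecidableEq P] {k : ℕ} (A : OnlineAlgo P k)
    (σ : ℕ → P) (m : ℕ) : ℕ :=
  missCount σ (A.caches σ) m

/-- In the `ℓ`-layered paging problem with `n` experts per layer, pages are
pairs (layer, expert index) with layer in `[0, ℓ)` and expert index in `[0, n)`;
a request sequence is layered if its `i`-th request is a page of layer `i % ℓ`.
A round is a block of `ℓ` consecutive requests starting at a multiple of `ℓ`. -/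
def IsLayered (n ℓ : ℕ) (σ : ℕ → ℕ × ℕ) : Prop :=
  ∀ i, (σ i).1 = i % ℓ ∧ (σ i).2 < n

/-- The cache of the LRU (least recently used) algorithm just before serving
request `i` of `σ`: it consists of the (at most `k`) most recently requested
distinct pages, which is exactly the cache content obtained by evicting, on
each miss with a full cache, the page whose most recent request is earliest. -/
def lruCaches {P : Type*} [DecidableEq P] (k : ℕ) (σ : ℕ → P) (i : ℕ) : Finset P :=
  ((((List.range i).map σ).dedup).reverse.take k).toFinset

/-- The number of cache misses of LRU on the first `m` requests of `σ`. -/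
def lruCost {P : Type*} [DecidableEq P] (k : ℕ) (σ : ℕ → P) (m : ℕ) : ℕ :=
  missCount σ (lruCaches k σ) m

namespace LruLB

def sig (ℓ k i : ℕ) : ℕ × ℕ := (i % (k+1) % ℓ, i % (k+1) / ℓ)

variable {ℓ k n : ℕ}

lemma sig_eq_iff (hℓ : 1 ≤ ℓ) {a b : ℕ} :
    sig ℓ k a = sig ℓ k b ↔ a % (k+1) = b % (k+1) := by
  constructor
  · intro h
    have h1 : a % (k+1) % ℓ = b % (k+1) % ℓ := congrArg Prod.fst h
    have h2 : a % (k+1) / ℓ = b % (k+1) / ℓ := congrArg Prod.snd h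
    have ea := Nat.div_add_mod (a % (k+1)) ℓ
    have eb := Nat.div_add_mod (b % (k+1)) ℓ
    rw [← ea, ← eb, h1, h2]
  · intro h
    simp only [sig, h]

lemma sig_mod (hℓ : 1 ≤ ℓ) (j : ℕ) : sig ℓ k (j % (k+1)) = sig ℓ k j :=
  (sig_eq_iff hℓ).2 (Nat.mod_mod_of_dvd j dvd_rfl)

lemma sig_ne (hℓ : 1 ≤ ℓ) {a b : ℕ} (h1 : a < b) (h2 : b - a ≤ k) :
    sig ℓ k a ≠ sig ℓ k b := by
  intro h
  have h3 : a % (k+1) = b % (k+1) := (sig_eq_iff hℓ).1 h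
  have h4 : (k+1) ∣ b - a := (Nat.modEq_iff_dvd' h1.le).1 h3
  have h5 := Nat.le_of_dvd (by omega) h4
  omega

lemma sig_layered (hℓ : 1 ≤ ℓ) (hdvd : ℓ ∣ k + 1) (hpages : k + 1 ≤ n * ℓ) :
    IsLayered n ℓ (sig ℓ k) := by
  intro i
  refine ⟨Nat.mod_mod_of_dvd i hdvd, ?_⟩
  have h1 : i % (k+1) < k + 1 := Nat.mod_lt _ (by omega)
  have h2 : i % (k+1) < ℓ * n := by rw [mul_comm]; omega
  exact Nat.div_lt_of_lt_mul h2

lemma union_append {α : Type*} [DecidableEq α] (A T : List α) : ∃ X, A ∪ T = X ++ T := by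
  induction A with
  | nil => exact ⟨[], rfl⟩
  | cons a A ih =>
    obtain ⟨X, hX⟩ := ih
    by_cases h : a ∈ A ∪ T
    · exact ⟨X, by rw [List.cons_union, List.insert_of_mem h, hX]⟩
    · exact ⟨a :: X, by rw [List.cons_union, List.insert_of_not_mem h, hX]; rfl⟩

lemma lru_miss (hℓ : 1 ≤ ℓ) (hk : 1 ≤ k) (i : ℕ) :
    sig ℓ k i ∉ lruCaches k (sig ℓ k) i := by
  intro hmem
  simp only [lruCaches, List.mem_toFinset] at hmem
  by_cases hi : i ≤ k
  · have h1 : sig ℓ k i ∈ (List.range i).map (sig ℓ k) :=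
      List.mem_dedup.1 (List.mem_reverse.1 (List.mem_of_mem_take hmem))
    obtain ⟨j, hj, hval⟩ := List.mem_map.1 h1
    rw [List.mem_range] at hj
    have h2 := (sig_eq_iff hℓ).1 hval
    rw [Nat.mod_eq_of_lt (by omega), Nat.mod_eq_of_lt (by omega)] at h2
    omega
  · push_neg at hi
    obtain ⟨d, rfl⟩ : ∃ d, i = d + k := ⟨i - k, by omega⟩
    set T : List (ℕ × ℕ) := (List.range k).map (fun t => sig ℓ k (d + t)) with hT
    have hTlen : T.length = k := by simp [hT]
    have hTnd : T.Nodup := by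
      refine List.Nodup.map_on ?_ List.nodup_range
      intro x hx y hy hxy
      rw [List.mem_range] at hx hy
      by_contra hne
      rcases Nat.lt_or_ge x y with h | h
      · exact sig_ne hℓ (show d + x < d + y by omega) (by omega) hxy
      · exact sig_ne hℓ (show d + y < d + x by omega) (by omega) hxy.symm
    have hsplit : (List.range (d+k)).map (sig ℓ k) = ((List.range d).map (sig ℓ k)) ++ T := by
      rw [List.range_add, List.map_append, List.map_map]
      rfl
    obtain ⟨X, hX⟩ := union_append ((List.range d).map (sig ℓ k)) T
    have hded : ((List.range (d+k)).map (sig ℓ k)).dedup = X ++ T := by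
      rw [hsplit, List.dedup_append, hTnd.dedup, hX]
    rw [hded, List.reverse_append, List.take_left' (by simp [hTlen])] at hmem
    rw [List.mem_reverse, hT, List.mem_map] at hmem
    obtain ⟨t, ht, hval⟩ := hmem
    rw [List.mem_range] at ht
    exact sig_ne hℓ (show d + t < d + k by omega) (by omega) hval

lemma lru_cost (hℓ : 1 ≤ ℓ) (hk : 1 ≤ k) (m : ℕ) : lruCost k (sig ℓ k) m = m := by
  unfold lruCost missCount
  rw [Finset.filter_true_of_mem, Finset.card_range]
  intro i _
  exact lru_miss hℓ hk i

def off (ℓ k : ℕ) : ℕ → Finset (ℕ × ℕ)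
  | 0 => ∅
  | (j+1) => ((Finset.range (j+1)).image (sig ℓ k)).erase (sig ℓ k (k * (j / k + 1)))

lemma w_lt (hk : 1 ≤ k) (i : ℕ) : i < k * (i / k + 1) ∧ k * (i / k + 1) ≤ i + k := by
  have h1 := Nat.div_add_mod i k
  have h2 : i % k < k := Nat.mod_lt _ hk
  have h3 : k * (i / k + 1) = k * (i / k) + k := by ring
  omega

lemma card_image_le_K (hℓ : 1 ≤ ℓ) (m : ℕ) :
    ((Finset.range m).image (sig ℓ k)).card ≤ k + 1 := by
  have hsub : (Finset.range m).image (sig ℓ k) ⊆ (Finset.range (k+1)).image (sig ℓ k) := by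
    intro p hp
    obtain ⟨j, hj, rfl⟩ := Finset.mem_image.1 hp
    exact Finset.mem_image.2 ⟨j % (k+1), Finset.mem_range.2 (Nat.mod_lt _ (by omega)),
      sig_mod hℓ j⟩
  calc _ ≤ ((Finset.range (k+1)).image (sig ℓ k)).card := Finset.card_le_card hsub
    _ ≤ (Finset.range (k+1)).card := Finset.card_image_le
    _ = k + 1 := Finset.card_range _

lemma dvd_w (hk : 1 ≤ k) {i' : ℕ} (hd : k ∣ i' + 1) : k * (i' / k + 1) = i' + 1 := by
  obtain ⟨t, ht⟩ := hd
  have ht0 : t ≠ 0 := by rintro rfl; simp at ht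
  obtain ⟨s, rfl⟩ : ∃ s, t = s + 1 := ⟨t - 1, by omega⟩
  have h1 : k * (s + 1) = k * s + k := by ring
  have h2 : i' = k * s + (k - 1) := by omega
  have h3 : i' / k = s := by
    rw [h2, Nat.mul_add_div (by omega), Nat.div_eq_of_lt (by omega)]
    omega
  rw [h3]
  omega

lemma succ_div_eq (hk : 1 ≤ k) {i' : ℕ} (hd : ¬ k ∣ i' + 1) : (i' + 1) / k = i' / k := by
  rw [Nat.succ_div]
  simp [hd]

lemma off_exec (hℓ : 1 ≤ ℓ) (hk : 1 ≤ k) : IsExec k (sig ℓ k) (off ℓ k) := by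
  refine ⟨rfl, fun i => ⟨?_, ?_, ?_⟩⟩
  · show sig ℓ k i ∈ ((Finset.range (i+1)).image (sig ℓ k)).erase (sig ℓ k (k * (i / k + 1)))
    refine Finset.mem_erase.2 ⟨?_, Finset.mem_image.2 ⟨i, Finset.mem_range.2 (by omega), rfl⟩⟩
    have hw := w_lt hk i
    exact sig_ne hℓ hw.1 (by omega)
  · intro p hp
    replace hp : p ∈ ((Finset.range (i+1)).image (sig ℓ k)).erase
        (sig ℓ k (k * (i / k + 1))) := hp
    obtain ⟨hpne, hpim⟩ := Finset.mem_erase.1 hp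
    obtain ⟨j, hj, rfl⟩ := Finset.mem_image.1 hpim
    rw [Finset.mem_range] at hj
    by_cases hpi : sig ℓ k j = sig ℓ k i
    · rw [hpi]; exact Finset.mem_insert_self _ _
    · refine Finset.mem_insert_of_mem ?_
      have hj' : j < i := by
        rcases Nat.lt_or_ge j i with h | h
        · exact h
        · exact absurd (by rw [show j = i by omega]) hpi
      obtain ⟨i', rfl⟩ : ∃ i', i = i' + 1 := ⟨i - 1, by omega⟩
      show sig ℓ k j ∈ ((Finset.range (i'+1)).image (sig ℓ k)).erase
        (sig ℓ k (k * (i' / k + 1)))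
      refine Finset.mem_erase.2 ⟨?_, Finset.mem_image.2 ⟨j, Finset.mem_range.2 hj', rfl⟩⟩
      by_cases hd : k ∣ i' + 1
      · rw [dvd_w hk hd]; exact hpi
      · rw [← succ_div_eq hk hd]; exact hpne
  · show (((Finset.range (i+1)).image (sig ℓ k)).erase (sig ℓ k (k * (i / k + 1)))).card ≤ k
    by_cases hik : i + 1 ≤ k
    · calc _ ≤ ((Finset.range (i+1)).image (sig ℓ k)).card := Finset.card_erase_le
        _ ≤ (Finset.range (i+1)).card := Finset.card_image_le
        _ ≤ k := by rw [Finset.card_range]; omega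
    · have hw := w_lt hk i
      have hmem : sig ℓ k (k * (i/k + 1)) ∈ (Finset.range (i+1)).image (sig ℓ k) := by
        refine Finset.mem_image.2 ⟨k * (i/k+1) - (k+1), Finset.mem_range.2 (by omega), ?_⟩
        apply (sig_eq_iff hℓ).2
        have h6 : k * (i/k+1) - (k+1) + (k+1) = k * (i/k+1) := by omega
        conv_rhs => rw [← h6]
        rw [Nat.add_mod_right]
      rw [Finset.card_erase_of_mem hmem]
      have := card_image_le_K (k := k) hℓ (i+1)
      omega

lemma off_hit (hℓ : 1 ≤ ℓ) (hk : 1 ≤ k) {i : ℕ} (h1 : k + 1 ≤ i) (h2 : ¬ k ∣ i) :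
    sig ℓ k i ∈ off ℓ k i := by
  obtain ⟨i', rfl⟩ : ∃ i', i = i' + 1 := ⟨i - 1, by omega⟩
  show sig ℓ k (i'+1) ∈ ((Finset.range (i'+1)).image (sig ℓ k)).erase
    (sig ℓ k (k * (i' / k + 1)))
  have hw := w_lt hk (i' + 1)
  rw [succ_div_eq hk h2] at hw
  refine Finset.mem_erase.2 ⟨sig_ne hℓ hw.1 (by omega), ?_⟩
  refine Finset.mem_image.2 ⟨i' + 1 - (k+1), Finset.mem_range.2 (by omega), ?_⟩
  apply (sig_eq_iff hℓ).2
  have h6 : i' + 1 - (k+1) + (k+1) = i' + 1 := by omega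
  conv_rhs => rw [← h6]
  rw [Nat.add_mod_right]

lemma off_misses (hℓ : 1 ≤ ℓ) (hk : 1 ≤ k) (m : ℕ) :
    missCount (sig ℓ k) (off ℓ k) m ≤ m / k + k + 2 := by
  unfold missCount
  have hsub : (Finset.range m).filter (fun i => sig ℓ k i ∉ off ℓ k i) ⊆
      Finset.range (k+1) ∪ (Finset.range (m/k + 1)).image (fun t => k * t) := by
    intro i hi
    obtain ⟨him, hmiss⟩ := Finset.mem_filter.1 hi
    rw [Finset.mem_range] at him
    rw [Finset.mem_union]
    by_cases hik : i ≤ k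
    · exact Or.inl (Finset.mem_range.2 (by omega))
    · right
      have hd : k ∣ i := by
        by_contra hnd
        exact hmiss (off_hit hℓ hk (by omega) hnd)
      refine Finset.mem_image.2 ⟨i / k, Finset.mem_range.2 ?_, Nat.mul_div_cancel' hd⟩
      have : i / k ≤ m / k := Nat.div_le_div_right him.le
      omega
  calc _ ≤ _ := Finset.card_le_card hsub
    _ ≤ (Finset.range (k+1)).card + ((Finset.range (m/k+1)).image (fun t => k*t)).card :=
        Finset.card_union_le _ _
    _ ≤ (k+1) + (m/k+1) := by
        have h1 := Finset.card_image_le (s := Finset.range (m/k+1)) (f := fun t => k*t)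
        rw [Finset.card_range]
        rw [Finset.card_range] at h1
        omega
    _ = m / k + k + 2 := by omega

lemma opt_le (hℓ : 1 ≤ ℓ) (hk : 1 ≤ k) (m : ℕ) :
    OPT k (sig ℓ k) m ≤ m / k + k + 2 :=
  le_trans (Nat.sInf_le ⟨off ℓ k, off_exec hℓ hk, rfl⟩) (off_misses hℓ hk m)

end LruLB

/-- For any `ℓ ≥ 1` and cache size `k` such that `ℓ` divides
`k + 1`, the LRU algorithm for the `ℓ`-layered paging problem (with enough
pages, `n * ℓ ≥ k + 1`) has competitive ratio at least `k`: whenever LRU is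
`r`-competitive with additive constant `c`, necessarily `r ≥ k`. -/
theorem lru_lower_bound
    {n ℓ k : ℕ} (hℓ : 1 ≤ ℓ) (hdvd : ℓ ∣ k + 1) (hpages : k + 1 ≤ n * ℓ)
    (r c : ℝ)
    (hcomp : ∀ σ : ℕ → ℕ × ℕ, IsLayered n ℓ σ → ∀ m : ℕ,
      (lruCost k σ m : ℝ) ≤ r * (OPT k σ m : ℝ) + c) :
    (k : ℝ) ≤ r := by
  rcases Nat.eq_zero_or_pos k with hk0 | hk
  · subst hk0
    simp only [Nat.cast_zero]
    by_contra hr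
    push_neg at hr
    have hn : 1 ≤ n := by
      rcases Nat.eq_zero_or_pos n with rfl | h
      · simp at hpages
      · exact h
    set σ : ℕ → ℕ × ℕ := fun i => (i % ℓ, 0) with hσ
    have hlay : IsLayered n ℓ σ := fun i => ⟨rfl, hn⟩
    have hlru : ∀ m, lruCost 0 σ m = m := by
      intro m
      unfold lruCost missCount
      rw [Finset.filter_true_of_mem, Finset.card_range]
      intro i _
      simp [lruCaches]
    obtain ⟨m, hm⟩ := exists_nat_gt c
    have h1 := hcomp σ hlay m
    rw [hlru m] at h1
    have h2 : r * (OPT 0 σ m : ℝ) ≤ 0 :=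
      mul_nonpos_of_nonpos_of_nonneg hr.le (Nat.cast_nonneg _)
    linarith
  · by_contra hr
    push_neg at hr
    have hk0 : (0:ℝ) < k := by exact_mod_cast hk
    set r' : ℝ := max r 0 with hr'def
    have hr'0 : 0 ≤ r' := le_max_right _ _
    have hr'k : r' < k := max_lt hr hk0
    have key : ∀ M : ℕ, (M:ℝ) * ((k:ℝ) - r') ≤ r' * ((k:ℝ) + 2) + c := by
      intro M
      have hlay := LruLB.sig_layered hℓ hdvd hpages
      have h1 := hcomp (LruLB.sig ℓ k) hlay (k * M)
      rw [LruLB.lru_cost hℓ hk (k * M)] at h1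
      set o : ℝ := (OPT k (LruLB.sig ℓ k) (k * M) : ℝ) with ho
      have h2 : o ≤ (M:ℝ) + (k:ℝ) + 2 := by
        have h := LruLB.opt_le hℓ hk (k * M)
        rw [Nat.mul_div_cancel_left M hk] at h
        rw [ho]
        exact_mod_cast h
      have h3 : r * o ≤ r' * o := mul_le_mul_of_nonneg_right (le_max_left _ _) (Nat.cast_nonneg _)
      have h4 : r' * o ≤ r' * ((M:ℝ) + (k:ℝ) + 2) := mul_le_mul_of_nonneg_left h2 hr'0
      have h5 : ((k * M : ℕ) : ℝ) = (k:ℝ) * (M:ℝ) := by push_cast; ring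
      nlinarith [h1, h3, h4, h5]
    obtain ⟨M, hM⟩ := exists_nat_gt ((r' * ((k:ℝ) + 2) + c) / ((k:ℝ) - r'))
    have hpos : (0:ℝ) < (k:ℝ) - r' := by linarith
    have hkey := key M
    rw [div_lt_iff₀ hpos] at hM
    linarith
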